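/- Let C ⊆ F_q^n be the q-ary simplex code of dimension k, with length n = (q^k - 1)/(q - 1). Then the expected number of uniformly random column draws (with replacement) from a generator matrix of C until the drawn columns span F_q^k equals k + sum_{i=1}^k (q^(i-1) - 1)/(q^k - q^(i-1)). -/

import Mathlib

/-- Gaussian binomial coefficient as a polynomial in `q`, evaluated at an integer. -/
def qb (q : ℤ) : ℕ → ℕ → ℤ
  | _, 0 => 1
  | 0, _+1 => 0
  | n+1, k+1 => qb q n k + q ^ (k+1) * qb q n (k+1)

/-- Hamming weight of a vector. -/
noncomputable def hamWt {R : Type*} [Zero R] {n : ℕ} (x : Fin n → R) : ℕ :=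
  Nat.card {i : Fin n // x i ≠ 0}

/-- The `n`-th harmonic number. -/
noncomputable def harm (n : ℕ) : ℝ := ∑ i ∈ Finset.range n, (1 : ℝ) / (i + 1)

/-- Expected number of i.i.d. uniform draws of columns of `G` (with replacement)
until the drawn columns span `F^k`, written as `∑_{t≥0} P(T > t)`. -/
noncomputable def coverDepth {F : Type*} [Field F] {k n : ℕ}
    (G : Matrix (Fin k) (Fin n) F) : ℝ :=
  ∑' t : ℕ, (Nat.card {f : Fin t → Fin n //
      Submodule.span F (Set.range fun i => fun r => G r (f i)) ≠ ⊤} : ℝ) / (n : ℝ) ^ t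

/-- Vectors whose support is contained in the finite set `S`. -/
def zeroOutside (F : Type*) [Field F] (n : ℕ) (S : Finset (Fin n)) :
    Submodule F (Fin n → F) where
  carrier := {x | ∀ i ∉ S, x i = 0}
  add_mem' := by intro a b ha hb i hi; simp [ha i hi, hb i hi]
  zero_mem' := by intro i hi; rfl
  smul_mem' := by intro c a ha i hi; simp [ha i hi]

/-- The dual code with respect to the standard bilinear form. -/
def dualCode (F : Type*) [Field F] (n : ℕ) (C : Submodule F (Fin n → F)) :
    Submodule F (Fin n → F) where
  carrier := {y | ∀ x ∈ C, ∑ i, x i * y i = 0}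
  add_mem' := by
    intro a b ha hb x hx
    simp only [Pi.add_apply, mul_add, Finset.sum_add_distrib, ha x hx, hb x hx, add_zero]
  zero_mem' := by intro x hx; simp
  smul_mem' := by
    intro c a ha x hx
    simp only [Pi.smul_apply, smul_eq_mul, mul_left_comm, ← Finset.mul_sum, ha x hx, mul_zero]

/-- Projection onto the coordinates indexed by `S`. -/
def projS (F : Type*) [Field F] {n : ℕ} (S : Finset (Fin n)) :
    (Fin n → F) →ₗ[F] ({x // x ∈ S} → F) :=
  LinearMap.funLeft F F (fun i => (i : Fin n))

/-- The extension code of `C` over an extension field `E`. -/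
def extCode {F E : Type*} [Field F] [Field E] [Algebra F E] {n : ℕ}
    (C : Submodule F (Fin n → F)) : Submodule E (Fin n → E) :=
  Submodule.span E ((fun c : Fin n → F => fun i => algebraMap F E (c i)) '' C)

open Finset
set_option linter.unusedSectionVars false
set_option maxHeartbeats 1000000

section SimplexAux

lemma sx_geom_nat {q : ℕ} (hq : 1 ≤ q) (d : ℕ) :
    (∑ i ∈ Finset.range d, q ^ i) * (q - 1) = q ^ d - 1 := by
  induction d with
  | zero => simp
  | succ d ih =>
    rw [Finset.sum_range_succ, add_mul, ih]
    have h1 : 1 ≤ q ^ d := Nat.one_le_pow _ _ hq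
    have h2 : q ^ d ≤ q ^ (d+1) := Nat.pow_le_pow_right hq (by omega)
    have : q ^ d * (q - 1) = q ^ (d+1) - q ^ d := by
      rw [Nat.mul_sub_one]; ring_nf
    omega

variable {F : Type*} [Field F] [Fintype F] {k n : ℕ} (G : Matrix (Fin k) (Fin n) F)

def spanCols {t : ℕ} (f : Fin t → Fin n) : Submodule F (Fin k → F) :=
  Submodule.span F (Set.range fun i => fun r => G r (f i))

noncomputable def aCnt (t d : ℕ) : ℕ :=
  Nat.card {f : Fin t → Fin n // Module.finrank F (spanCols G f) = d}

lemma sx_countA (hnz : ∀ j : Fin n, (fun r => G r j) ≠ 0)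
    (hinj : ∀ j j' : Fin n,
      (∃ c : F, c ≠ 0 ∧ (fun r => G r j') = c • fun r => G r j) → j = j')
    (hsur : ∀ v : Fin k → F, v ≠ 0 → ∃ j : Fin n, ∃ c : F, c ≠ 0 ∧ v = c • fun r => G r j)
    (W : Submodule F (Fin k → F)) :
    Nat.card {j : Fin n // (fun r => G r j) ∈ W} =
      ∑ i ∈ Finset.range (Module.finrank F W), Fintype.card F ^ i := by
  classical
  set q := Fintype.card F with hqdef
  have hq : 2 ≤ q := Fintype.one_lt_card
  have e : {j : Fin n // (fun r => G r j) ∈ W} × {c : F // c ≠ 0} ≃ {v : W // v ≠ 0} := by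
    refine Equiv.ofBijective (fun p => ⟨⟨p.2.1 • fun r => G r p.1.1, W.smul_mem _ p.1.2⟩, ?_⟩) ⟨?_, ?_⟩
    · intro h
      have : p.2.1 • (fun r => G r p.1.1) = 0 := by
        simpa [Submodule.mk_eq_zero] using h
      exact (smul_ne_zero p.2.2 (hnz p.1.1)) this
    · rintro ⟨⟨j, hj⟩, ⟨c, hc⟩⟩ ⟨⟨j', hj'⟩, ⟨c', hc'⟩⟩ hp
      have heq : c • (fun r => G r j) = c' • (fun r => G r j') := by
        simpa [Subtype.ext_iff] using hp
      have hjj : j = j' := by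
        refine (hinj j j' ⟨c'⁻¹ * c, by simp [hc, hc'], ?_⟩)
        rw [mul_smul, heq, ← mul_smul, inv_mul_cancel₀ hc', one_smul]
      subst hjj
      have : (c - c') • (fun r => G r j) = 0 := by
        rw [sub_smul, heq, sub_self]
      rcases smul_eq_zero.mp this with h | h
      · have : c = c' := by linear_combination h
        simp [this]
      · exact absurd h (hnz j)
    · rintro ⟨⟨v, hvW⟩, hv0⟩
      have hv : v ≠ 0 := by simpa [Subtype.ext_iff] using hv0
      obtain ⟨j, c, hc, hvc⟩ := hsur v hv
      have hjW : (fun r => G r j) ∈ W := by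
        have : (fun r => G r j) = c⁻¹ • v := by rw [hvc, ← mul_smul, inv_mul_cancel₀ hc, one_smul]
        rw [this]; exact W.smul_mem _ hvW
      exact ⟨⟨⟨j, hjW⟩, ⟨c, hc⟩⟩, by simp [Subtype.ext_iff, hvc]⟩
  have h1 : Nat.card {j : Fin n // (fun r => G r j) ∈ W} * (q - 1) = q ^ Module.finrank F W - 1 := by
    have := Nat.card_eq_of_bijective e e.bijective
    rw [Nat.card_prod] at this
    have hc1 : Nat.card {c : F // c ≠ 0} = q - 1 := by
      rw [Nat.card_eq_fintype_card, Fintype.card_subtype_compl (· = (0:F)),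
        Fintype.card_subtype_eq]
    have hc2 : Nat.card {v : W // v ≠ 0} = q ^ Module.finrank F W - 1 := by
      rw [Nat.card_eq_fintype_card, Fintype.card_subtype_compl (· = (0:W)),
        Fintype.card_subtype_eq, Module.card_eq_pow_finrank (K := F) (V := W)]
    rw [hc1, hc2] at this
    exact this
  rw [← sx_geom_nat (by omega : 1 ≤ q)] at h1
  exact Nat.eq_of_mul_eq_mul_right (by omega) h1

lemma sx_spanCols_snoc {t : ℕ} (g : Fin t → Fin n) (j : Fin n) :
    spanCols G (Fin.snoc g j) =
      Submodule.span F {(fun r => G r j)} ⊔ spanCols G g := by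
  rw [spanCols, spanCols, ← Submodule.span_insert]
  congr 1
  ext x
  simp only [Set.mem_range, Set.mem_insert_iff]
  constructor
  · rintro ⟨i, rfl⟩
    rcases Fin.eq_castSucc_or_eq_last i with ⟨i', rfl⟩ | rfl
    · exact Or.inr ⟨i', by simp⟩
    · exact Or.inl (by simp)
  · rintro (rfl | ⟨i, rfl⟩)
    · exact ⟨Fin.last t, by simp⟩
    · exact ⟨i.castSucc, by simp⟩

lemma sx_rank_snoc_mem {t : ℕ} (g : Fin t → Fin n) (j : Fin n)
    (h : (fun r => G r j) ∈ spanCols G g) :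
    spanCols G (Fin.snoc g j) = spanCols G g := by
  rw [sx_spanCols_snoc, sup_eq_right.mpr]
  rwa [Submodule.span_singleton_le_iff_mem]

lemma sx_rank_snoc_not_mem (hnz : ∀ j : Fin n, (fun r => G r j) ≠ 0)
    {t : ℕ} (g : Fin t → Fin n) (j : Fin n)
    (h : (fun r => G r j) ∉ spanCols G g) :
    Module.finrank F (spanCols G (Fin.snoc g j)) = Module.finrank F (spanCols G g) + 1 := by
  rw [sx_spanCols_snoc]
  have hinf : Submodule.span F {(fun r => G r j)} ⊓ spanCols G g = ⊥ := by
    rw [eq_bot_iff]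
    rintro x ⟨hx1, hx2⟩
    rw [SetLike.mem_coe, Submodule.mem_span_singleton] at hx1
    obtain ⟨c, rfl⟩ := hx1
    rcases eq_or_ne c 0 with rfl | hc
    · simp
    · exfalso
      apply h
      have : (fun r => G r j) = c⁻¹ • (c • fun r => G r j) := by
        rw [← mul_smul, inv_mul_cancel₀ hc, one_smul]
      rw [this]
      exact (spanCols G g).smul_mem _ hx2
  have := Submodule.finrank_sup_add_finrank_inf_eq
    (Submodule.span F {(fun r => G r j)}) (spanCols G g)
  rw [hinf, finrank_bot, finrank_span_singleton (hnz j)] at this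
  omega

lemma sx_aCnt_zero (d : ℕ) : aCnt G 0 d = if d = 0 then 1 else 0 := by
  classical
  have hspan : ∀ f : Fin 0 → Fin n, spanCols G f = ⊥ := by
    intro f
    rw [spanCols]
    have : (Set.range fun i : Fin 0 => fun r => G r (f i)) = ∅ :=
      Set.range_eq_empty _
    rw [this, Submodule.span_empty]
  rcases eq_or_ne d 0 with rfl | hd
  · rw [aCnt, if_pos rfl, Nat.card_eq_one_iff_unique]
    constructor
    · constructor
      rintro ⟨f, hf⟩ ⟨f', hf'⟩
      ext i
      exact absurd i.2 (by omega)
    · exact ⟨⟨Fin.elim0, by rw [hspan, finrank_bot]⟩⟩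
  · rw [aCnt, if_neg hd, Nat.card_eq_zero]
    left
    constructor
    rintro ⟨f, hf⟩
    rw [hspan, finrank_bot] at hf
    exact hd hf.symm

lemma sx_aCnt_succ_zero (hnz : ∀ j : Fin n, (fun r => G r j) ≠ 0) (t : ℕ) :
    aCnt G (t+1) 0 = 0 := by
  rw [aCnt, Nat.card_eq_zero]
  left
  constructor
  rintro ⟨f, hf⟩
  rw [Submodule.finrank_eq_zero] at hf
  apply hnz (f 0)
  have : (fun r => G r (f 0)) ∈ spanCols G f :=
    Submodule.subset_span ⟨0, rfl⟩
  rw [hf] at this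
  simpa using this

lemma sx_aCnt_succ (hnz : ∀ j : Fin n, (fun r => G r j) ≠ 0)
    (hinj : ∀ j j' : Fin n,
      (∃ c : F, c ≠ 0 ∧ (fun r => G r j') = c • fun r => G r j) → j = j')
    (hsur : ∀ v : Fin k → F, v ≠ 0 → ∃ j : Fin n, ∃ c : F, c ≠ 0 ∧ v = c • fun r => G r j)
    (t d : ℕ) :
    aCnt G (t+1) (d+1) =
      (∑ i ∈ Finset.range (d+1), Fintype.card F ^ i) * aCnt G t (d+1)
      + (n - ∑ i ∈ Finset.range d, Fintype.card F ^ i) * aCnt G t d := by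
  classical
  set q := Fintype.card F with hq
  set A : (Fin t → Fin n) × Fin n → Prop := fun p =>
    Module.finrank F (spanCols G p.1) = d+1 ∧ (fun r => G r p.2) ∈ spanCols G p.1 with hA
  set B : (Fin t → Fin n) × Fin n → Prop := fun p =>
    Module.finrank F (spanCols G p.1) = d ∧ (fun r => G r p.2) ∉ spanCols G p.1 with hB
  have key : ∀ (g : Fin t → Fin n) (j : Fin n),
      Module.finrank F (spanCols G (Fin.snoc g j)) = d+1 ↔ A (g, j) ∨ B (g, j) := by
    intro g j
    by_cases hm : (fun r => G r j) ∈ spanCols G g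
    · rw [sx_rank_snoc_mem G g j hm]
      simp [hA, hB, hm]
    · rw [sx_rank_snoc_not_mem G hnz g j hm]
      simp only [hA, hB, hm, and_true, and_false, false_or, not_false_iff]
      omega
  have step1 : aCnt G (t+1) (d+1)
      = Nat.card {p : (Fin t → Fin n) × Fin n // A p ∨ B p} := by
    rw [aCnt]
    apply Nat.card_congr
    refine Equiv.subtypeEquiv
      ⟨fun f => (Fin.init f, f (Fin.last t)), fun p => Fin.snoc p.1 p.2,
        fun f => Fin.snoc_init_self f, fun p => by simp⟩ fun f => ?_
    simp only [Equiv.coe_fn_mk]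
    rw [← key, Fin.snoc_init_self]
  have hdisj : Disjoint A B := by
    intro C hCA hCB p hp
    exact absurd (hCA p hp).2 (hCB p hp).2
  have step2 : Nat.card {p : (Fin t → Fin n) × Fin n // A p ∨ B p}
      = Nat.card {p // A p} + Nat.card {p // B p} := by
    simp only [Nat.card_eq_fintype_card]
    exact Fintype.card_subtype_or_disjoint A B hdisj
  have cardA : Nat.card {p : (Fin t → Fin n) × Fin n // A p}
      = aCnt G t (d+1) * ∑ i ∈ Finset.range (d+1), q ^ i := by
    rw [Nat.card_congr (Equiv.subtypeProdEquivSigmaSubtype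
      (fun g j => Module.finrank F (spanCols G g) = d+1 ∧ (fun r => G r j) ∈ spanCols G g))]
    rw [Nat.card_eq_fintype_card, Fintype.card_sigma]
    have hterm : ∀ g : Fin t → Fin n,
        Fintype.card {j : Fin n // Module.finrank F (spanCols G g) = d+1
            ∧ (fun r => G r j) ∈ spanCols G g}
          = if Module.finrank F (spanCols G g) = d+1
              then ∑ i ∈ Finset.range (d+1), q ^ i else 0 := by
      intro g
      by_cases hg : Module.finrank F (spanCols G g) = d+1
      · rw [if_pos hg]
        rw [← hg, ← sx_countA G hnz hinj hsur (spanCols G g), Nat.card_eq_fintype_card]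
        exact Fintype.card_congr (Equiv.subtypeEquiv (Equiv.refl _) fun j => by simp [hg])
      · rw [if_neg hg, Fintype.card_eq_zero_iff]
        exact ⟨fun j => hg j.2.1⟩
    rw [Finset.sum_congr rfl (fun g _ => hterm g), ← Finset.sum_filter]
    rw [Finset.sum_const, smul_eq_mul]
    congr 1
    rw [aCnt, Nat.card_eq_fintype_card, Fintype.card_subtype]
  have cardB : Nat.card {p : (Fin t → Fin n) × Fin n // B p}
      = aCnt G t d * (n - ∑ i ∈ Finset.range d, q ^ i) := by
    rw [Nat.card_congr (Equiv.subtypeProdEquivSigmaSubtype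
      (fun g j => Module.finrank F (spanCols G g) = d ∧ (fun r => G r j) ∉ spanCols G g))]
    rw [Nat.card_eq_fintype_card, Fintype.card_sigma]
    have hterm : ∀ g : Fin t → Fin n,
        Fintype.card {j : Fin n // Module.finrank F (spanCols G g) = d
            ∧ (fun r => G r j) ∉ spanCols G g}
          = if Module.finrank F (spanCols G g) = d
              then n - ∑ i ∈ Finset.range d, q ^ i else 0 := by
      intro g
      by_cases hg : Module.finrank F (spanCols G g) = d
      · rw [if_pos hg]
        have h1 : Fintype.card {j : Fin n // (fun r => G r j) ∉ spanCols G g}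
            = n - ∑ i ∈ Finset.range d, q ^ i := by
          have := Fintype.card_subtype_compl (fun j : Fin n => (fun r => G r j) ∈ spanCols G g)
          rw [this, Fintype.card_fin, ← Nat.card_eq_fintype_card,
            sx_countA G hnz hinj hsur (spanCols G g), hg]
        rw [← h1]
        exact Fintype.card_congr (Equiv.subtypeEquiv (Equiv.refl _) fun j => by simp [hg])
      · rw [if_neg hg, Fintype.card_eq_zero_iff]
        exact ⟨fun j => hg j.2.1⟩
    rw [Finset.sum_congr rfl (fun g _ => hterm g), ← Finset.sum_filter]
    rw [Finset.sum_const, smul_eq_mul]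
    congr 1
    rw [aCnt, Nat.card_eq_fintype_card, Fintype.card_subtype]
  rw [step1, step2, cardA, cardB]
  ring

lemma sx_partitionN (t : ℕ) :
    Nat.card {f : Fin t → Fin n //
        Submodule.span F (Set.range fun i => fun r => G r (f i)) ≠ ⊤}
      = ∑ d ∈ Finset.range k, aCnt G t d := by
  classical
  have hiff : ∀ f : Fin t → Fin n,
      (Submodule.span F (Set.range fun i => fun r => G r (f i)) ≠ ⊤)
        ↔ Module.finrank F (spanCols G f) < k := by
    intro f
    have hle : Module.finrank F (spanCols G f) ≤ k := by
      have := Submodule.finrank_le (spanCols G f)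
      simpa [Module.finrank_fintype_fun_eq_card] using this
    constructor
    · intro h
      rcases lt_or_eq_of_le hle with h' | h'
      · exact h'
      · exfalso
        apply h
        apply Submodule.eq_top_of_finrank_eq
        rw [Module.finrank_fintype_fun_eq_card, Fintype.card_fin]; exact h'
    · intro h htop
      rw [spanCols] at h
      rw [htop] at h
      simp [Module.finrank_fintype_fun_eq_card] at h
  rw [Nat.card_congr (Equiv.subtypeEquiv (Equiv.refl (Fin t → Fin n))
    (q := fun f => Module.finrank F (spanCols G f) < k) hiff)]
  rw [Nat.card_eq_fintype_card, Fintype.card_subtype]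
  rw [Finset.card_eq_sum_card_fiberwise
    (f := fun f : Fin t → Fin n => Module.finrank F (spanCols G f))
    (t := Finset.range k) (fun f hf => by simpa using (Finset.mem_filter.mp hf).2)]
  refine Finset.sum_congr rfl fun d hd => ?_
  rw [Finset.filter_filter, aCnt, Nat.card_eq_fintype_card, Fintype.card_subtype]
  congr 1
  apply Finset.filter_congr
  intro f _
  simp only [Finset.mem_range] at hd
  constructor
  · rintro ⟨_, h⟩; exact h
  · intro h; exact ⟨by omega, h⟩

instance : Finite (Submodule F (Fin k → F)) :=
  Finite.of_injective (fun W => (W : Set (Fin k → F))) SetLike.coe_injective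

lemma sx_aCnt_le (hnz : ∀ j : Fin n, (fun r => G r j) ≠ 0)
    (hinj : ∀ j j' : Fin n,
      (∃ c : F, c ≠ 0 ∧ (fun r => G r j') = c • fun r => G r j) → j = j')
    (hsur : ∀ v : Fin k → F, v ≠ 0 → ∃ j : Fin n, ∃ c : F, c ≠ 0 ∧ v = c • fun r => G r j)
    (t d : ℕ) :
    aCnt G t d ≤ Nat.card {W : Submodule F (Fin k → F) // Module.finrank F W = d}
      * (∑ i ∈ Finset.range d, Fintype.card F ^ i) ^ t := by
  classical
  have hmap : aCnt G t d ≤ Nat.card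
      (Σ W : {W : Submodule F (Fin k → F) // Module.finrank F W = d},
        (Fin t → {j : Fin n // (fun r => G r j) ∈ W.1})) := by
    rw [aCnt]
    apply Nat.card_le_card_of_injective
      (fun f => ⟨⟨spanCols G f.1, f.2⟩,
        fun i => ⟨f.1 i, Submodule.subset_span ⟨i, rfl⟩⟩⟩)
    intro f f' hff
    ext i
    have := congrArg (fun s : (Σ W : {W : Submodule F (Fin k → F) // Module.finrank F W = d},
        (Fin t → {j : Fin n // (fun r => G r j) ∈ W.1})) => ((s.2 i : {j : Fin n // _}) : Fin n)) hff
    exact congrArg Fin.val (by simpa using this)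
  refine hmap.trans ?_
  letI : Fintype (Submodule F (Fin k → F)) := Fintype.ofFinite _
  rw [Nat.card_eq_fintype_card, Fintype.card_sigma]
  have hterm : ∀ W : {W : Submodule F (Fin k → F) // Module.finrank F W = d},
      Fintype.card (Fin t → {j : Fin n // (fun r => G r j) ∈ W.1})
        = (∑ i ∈ Finset.range d, Fintype.card F ^ i) ^ t := by
    intro W
    rw [Fintype.card_fun, ← Nat.card_eq_fintype_card,
      sx_countA G hnz hinj hsur W.1, W.2, Fintype.card_fin]
  rw [Finset.sum_congr rfl (fun W _ => hterm W), Finset.sum_const, smul_eq_mul]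
  apply le_of_eq
  congr 1
  rw [Finset.card_univ, Nat.card_eq_fintype_card]

lemma sx_tsum_rec (n : ℝ) (hn : 0 < n) (a b : ℕ → ℝ) (md md1 : ℝ)
    (hlt : md1 < n) (hmd : md < n)
    (hS1 : Summable fun t => a t / n ^ t) (hS2 : Summable fun t => b t / n ^ t)
    (ha0 : a 0 = 0)
    (hrec : ∀ t, a (t+1) = md1 * a t + (n - md) * b t)
    (hb : ∑' t, b t / n ^ t = n / (n - md)) :
    ∑' t, a t / n ^ t = n / (n - md1) := by
  have key : ∀ t, a (t+1) / n ^ (t+1)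
      = (md1 / n) * (a t / n ^ t) + ((n - md) / n) * (b t / n ^ t) := by
    intro t
    rw [hrec t, pow_succ]
    rw [div_mul_div_comm, div_mul_div_comm, ← add_div, mul_comm (n^t) n]
  have heq := Summable.tsum_eq_zero_add hS1
  rw [show a 0 / n ^ 0 = 0 by simp [ha0], zero_add] at heq
  have h2 : ∑' t, a (t+1) / n ^ (t+1)
      = (md1 / n) * (∑' t, a t / n ^ t) + ((n - md) / n) * (∑' t, b t / n ^ t) := by
    rw [tsum_congr key, Summable.tsum_add (hS1.mul_left _) (hS2.mul_left _),
      tsum_mul_left, tsum_mul_left]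
  rw [h2, hb] at heq
  have hnd : n - md ≠ 0 := by intro h; linarith [sub_eq_zero.mp h]
  have hnd1 : n - md1 ≠ 0 := by intro h; linarith [sub_eq_zero.mp h]
  rw [eq_div_iff hnd1]
  have hn' : n ≠ 0 := ne_of_gt hn
  field_simp at heq
  nlinarith [heq]

end SimplexAux

theorem stmt7 {F : Type*} [Field F] [Fintype F] {k n : ℕ} (hk : 2 ≤ k)
    (G : Matrix (Fin k) (Fin n) F)
    (hn : n * (Fintype.card F - 1) = Fintype.card F ^ k - 1)
    (hnz : ∀ j : Fin n, (fun r => G r j) ≠ 0)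
    (hinj : ∀ j j' : Fin n,
      (∃ c : F, c ≠ 0 ∧ (fun r => G r j') = c • fun r => G r j) → j = j')
    (hsur : ∀ v : Fin k → F, v ≠ 0 → ∃ j : Fin n, ∃ c : F, c ≠ 0 ∧ v = c • fun r => G r j) :
    coverDepth G = k + ∑ i ∈ Finset.range k,
      ((Fintype.card F : ℝ) ^ i - 1) /
        ((Fintype.card F : ℝ) ^ k - (Fintype.card F : ℝ) ^ i) := by
  classical
  have hq : 2 ≤ Fintype.card F := Fintype.one_lt_card
  set q := Fintype.card F with hqdef
  have hmdef : ∀ d : ℕ, True := fun _ => trivial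
  set m : ℕ → ℕ := fun d => ∑ i ∈ Finset.range d, q ^ i with hm
  have hms : ∀ d, m (d+1) = m d + q ^ d := fun d => Finset.sum_range_succ _ _
  have hmsm : StrictMono m := strictMono_nat_of_lt_succ (fun d => by
    have h1 : 1 ≤ q ^ d := Nat.one_le_pow _ _ (by omega)
    rw [hms]; omega)
  have hmk : n = m k := by
    have h1 : m k * (q - 1) = q ^ k - 1 := sx_geom_nat (by omega) k
    have hq1 : 0 < q - 1 := by omega
    have h2 : n * (q - 1) = m k * (q - 1) := by rw [h1]; exact hn
    exact Nat.eq_of_mul_eq_mul_right hq1 h2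
  have hmlt : ∀ d, d < k → m d < n := fun d hd => hmk ▸ hmsm hd
  have hm0 : m 0 = 0 := by simp [hm]
  have hn0 : 0 < n := by have := hmlt 0 (by omega); omega
  have hnR : (0:ℝ) < (n:ℝ) := by exact_mod_cast hn0
  have hnne : (n:ℝ) ≠ 0 := ne_of_gt hnR
  -- summability
  have hsummable : ∀ d, d < k → Summable (fun t => (aCnt G t d : ℝ) / (n:ℝ)^t) := by
    intro d hd
    have hmd : ((m d : ℝ)) / n < 1 := by
      rw [div_lt_one hnR]
      exact_mod_cast hmlt d hd
    have hmd0 : (0:ℝ) ≤ (m d : ℝ)/n := by positivity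
    have hgeo : Summable (fun t : ℕ =>
        (Nat.card {W : Submodule F (Fin k → F) // Module.finrank F W = d} : ℝ)
        * ((m d : ℝ)/n)^t) := (summable_geometric_of_lt_one hmd0 hmd).mul_left _
    refine Summable.of_nonneg_of_le (fun t => by positivity) ?_ hgeo
    intro t
    rw [div_pow, ← mul_div_assoc]
    gcongr
    exact_mod_cast sx_aCnt_le G hnz hinj hsur t d
  -- tsum value
  have hS : ∀ d, d < k → ∑' t, (aCnt G t d : ℝ)/(n:ℝ)^t = (n:ℝ) / ((n:ℝ) - (m d : ℝ)) := by
    intro d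
    induction d with
    | zero =>
      intro _
      have hterm : ∀ t, (aCnt G t 0 : ℝ)/(n:ℝ)^t = if t = 0 then 1 else 0 := by
        intro t
        cases t with
        | zero => simp [sx_aCnt_zero]
        | succ t => simp [sx_aCnt_succ_zero G hnz t]
      rw [tsum_congr hterm, tsum_ite_eq]
      rw [hm0]
      simp [div_self hnne]
    | succ d ih =>
      intro hdk
      have hd : d < k := by omega
      refine sx_tsum_rec (n:ℝ) hnR _ _ (m d : ℝ) (m (d+1) : ℝ)
        (by exact_mod_cast hmlt _ hdk) (by exact_mod_cast hmlt _ hd)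
        (hsummable _ hdk) (hsummable _ hd) (by simp [sx_aCnt_zero]) ?_ (ih hd)
      intro t
      rw [sx_aCnt_succ G hnz hinj hsur t d]
      rw [show (∑ i ∈ Finset.range (d+1), Fintype.card F ^ i) = m (d+1) from rfl,
          show (∑ i ∈ Finset.range d, Fintype.card F ^ i) = m d from rfl]
      rw [Nat.cast_add, Nat.cast_mul, Nat.cast_mul, Nat.cast_sub (le_of_lt (hmlt d hd))]
  -- assemble
  have h1 : ∀ t : ℕ, (Nat.card {f : Fin t → Fin n //
      Submodule.span F (Set.range fun i => fun r => G r (f i)) ≠ ⊤} : ℝ) / (n:ℝ)^t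
        = ∑ d ∈ Finset.range k, (aCnt G t d : ℝ)/(n:ℝ)^t := by
    intro t
    rw [sx_partitionN G t]
    push_cast
    rw [Finset.sum_div]
  rw [coverDepth, tsum_congr h1,
    Summable.tsum_finsetSum (fun d hd => hsummable d (Finset.mem_range.mp hd))]
  rw [Finset.sum_congr rfl (fun d hd => hS d (Finset.mem_range.mp hd))]
  -- term arithmetic
  have hq1R : (1:ℝ) < (q:ℝ) := by exact_mod_cast hq
  have hqm1 : ((q:ℝ) - 1) ≠ 0 := by intro h; linarith [sub_eq_zero.mp h]
  have hnr : (n:ℝ) * ((q:ℝ) - 1) = (q:ℝ)^k - 1 := by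
    have h1 : (1:ℕ) ≤ q ^ k := Nat.one_le_pow _ _ (by omega)
    calc (n:ℝ) * ((q:ℝ)-1) = ((n * (q-1) : ℕ) : ℝ) := by
          push_cast [Nat.cast_sub (by omega : 1 ≤ q)]; ring
    _ = ((q^k - 1 : ℕ):ℝ) := by rw [hn]
    _ = (q:ℝ)^k - 1 := by push_cast [Nat.cast_sub h1]; ring
  have hterm : ∀ d ∈ Finset.range k, (n:ℝ)/((n:ℝ) - (m d:ℝ))
      = 1 + ((q:ℝ)^d - 1)/((q:ℝ)^k - (q:ℝ)^d) := by
    intro d hd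
    rw [Finset.mem_range] at hd
    have hpow : (q:ℝ)^d < (q:ℝ)^k := by
      exact pow_lt_pow_right₀ hq1R hd
    have hmdr : ((m d : ℝ)) * ((q:ℝ) - 1) = (q:ℝ)^d - 1 := by
      have hgeo : m d * (q - 1) = q ^ d - 1 := sx_geom_nat (by omega) d
      have h1 : (1:ℕ) ≤ q ^ d := Nat.one_le_pow _ _ (by omega)
      calc (m d:ℝ) * ((q:ℝ)-1) = ((m d * (q-1) : ℕ) : ℝ) := by
            push_cast [Nat.cast_sub (by omega : 1 ≤ q)]; ring
      _ = ((q^d - 1 : ℕ):ℝ) := by rw [hgeo]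
      _ = (q:ℝ)^d - 1 := by push_cast [Nat.cast_sub h1]; ring
    have hsub : ((n:ℝ) - (m d:ℝ)) * ((q:ℝ)-1) = (q:ℝ)^k - (q:ℝ)^d := by
      rw [sub_mul, hmdr, hnr]; ring
    have hden : (q:ℝ)^k - (q:ℝ)^d ≠ 0 := by
      intro h; linarith [sub_eq_zero.mp h]
    have hndR : (n:ℝ) - (m d:ℝ) ≠ 0 := by
      have : (m d : ℝ) < n := by exact_mod_cast hmlt d hd
      intro h; linarith [sub_eq_zero.mp h]
    have e2 : (n:ℝ) - (m d:ℝ) = ((q:ℝ)^k - (q:ℝ)^d)/((q:ℝ)-1) := by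
      rw [eq_div_iff hqm1]; exact hsub
    rw [e2, div_div_eq_mul_div, hnr]
    field_simp
    ring
  rw [Finset.sum_congr rfl hterm, Finset.sum_add_distrib, Finset.sum_const,
    Finset.card_range, nsmul_eq_mul, mul_one]
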